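/- Let G : ℝ^k → ℓ²(ℕ; ℝ) be a (k,d)-generalized generative network with layer widths 2 ≤ k = k_0 ≤ k_1 ≤ ⋯ ≤ k_d. Then there exist a natural number N with N ≤ (2e·k_d/k)^{kd} and convex cones C_1, …, C_N ⊆ ℓ²(ℕ; ℝ), each contained in a linear subspace of dimension at most k, such that the range of G equals C_1 ∪ ⋯ ∪ C_N. -/

import Mathlib

noncomputable section

/-- `ℓ²(ℕ; ℝ)`, the Hilbert space of square-summable real sequences. -/
abbrev HR := lp (fun _ : ℕ => ℝ) 2

/-- The composition of the first `d` layers of a ReLU network with layer widths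
`kf 0, kf 1, …` and weight matrices `Wmat i : ℝ^{kf (i+1) × kf i}`:
`reluLayers kf Wmat d z = σ(W⁽ᵈ⁾ σ(⋯ σ(W⁽¹⁾ z)⋯))` where `σ` is the entrywise
ReLU `t ↦ max t 0`. -/
def reluLayers (kf : ℕ → ℕ)
    (Wmat : ∀ i : ℕ, Matrix (Fin (kf (i + 1))) (Fin (kf i)) ℝ) :
    ∀ d : ℕ, (Fin (kf 0) → ℝ) → (Fin (kf d) → ℝ)
  | 0 => id
  | d + 1 => fun z j => max ((Wmat d).mulVec (reluLayers kf Wmat d z) j) 0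

open Finset

lemma sum_choose_le_pow {k m : ℕ} (hk : 1 ≤ k) (hkm : k ≤ m) :
    (∑ j ∈ Finset.range (k+1), (m.choose j : ℝ)) ≤ (Real.exp 1 * m / k) ^ k := by
  have hm0 : 0 < m := lt_of_lt_of_le hk hkm
  have hm : (0:ℝ) < m := by exact_mod_cast hm0
  have hkR : (0:ℝ) < k := by exact_mod_cast hk
  set t : ℝ := k / m with ht
  have ht0 : 0 < t := by positivity
  have ht1 : t ≤ 1 := by
    rw [ht, div_le_one hm]; exact_mod_cast hkm
  have key : (∑ j ∈ Finset.range (k+1), (m.choose j : ℝ)) * t ^ k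
      ≤ Real.exp 1 ^ k := by
    calc (∑ j ∈ Finset.range (k+1), (m.choose j : ℝ)) * t ^ k
        = ∑ j ∈ Finset.range (k+1), (m.choose j : ℝ) * t ^ k := by
          rw [Finset.sum_mul]
      _ ≤ ∑ j ∈ Finset.range (k+1), (m.choose j : ℝ) * t ^ j := by
          refine Finset.sum_le_sum fun j hj => ?_
          have hj' : j ≤ k := Nat.lt_succ_iff.mp (Finset.mem_range.mp hj)
          exact mul_le_mul_of_nonneg_left
            (pow_le_pow_of_le_one ht0.le ht1 hj') (by positivity)
      _ ≤ ∑ j ∈ Finset.range (m+1), (m.choose j : ℝ) * t ^ j := by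
          refine Finset.sum_le_sum_of_subset_of_nonneg
            (Finset.range_subset_range.mpr (by omega)) fun j _ _ => by positivity
      _ = (t + 1) ^ m := by
          rw [add_pow]
          refine Finset.sum_congr rfl fun j hj => by ring
      _ ≤ Real.exp t ^ m := by
          exact pow_le_pow_left₀ (by positivity) (Real.add_one_le_exp t) m
      _ = Real.exp (t * m) := by rw [← Real.exp_nat_mul]; ring_nf
      _ = Real.exp 1 ^ k := by
          rw [ht, div_mul_cancel₀ _ hm.ne', ← Real.exp_one_rpow (k:ℝ)]
          rw [← Real.rpow_natCast (Real.exp 1) k]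
  have htk : 0 < t ^ k := by positivity
  rw [← le_div_iff₀ htk] at key
  refine key.trans (le_of_eq ?_)
  rw [div_eq_mul_inv, ← inv_pow, ← mul_pow]
  congr 1
  field_simp [ht]
  rw [ht, div_mul_cancel₀ _ hm.ne']

def maskMap {q : ℕ} (b : Fin q → Bool) : (Fin q → ℝ) →ₗ[ℝ] (Fin q → ℝ) where
  toFun v := fun j => if b j then v j else 0
  map_add' u v := by funext j; by_cases h : b j <;> simp [h]
  map_smul' c v := by funext j; by_cases h : b j <;> simp [h]

def layerLin (kf : ℕ → ℕ)
    (Wmat : ∀ i : ℕ, Matrix (Fin (kf (i + 1))) (Fin (kf i)) ℝ)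
    (s : ∀ n : ℕ, Fin (kf (n+1)) → Bool) :
    ∀ n : ℕ, (Fin (kf 0) → ℝ) →ₗ[ℝ] (Fin (kf n) → ℝ)
  | 0 => LinearMap.id
  | n + 1 => (maskMap (s n)) ∘ₗ (Wmat n).mulVecLin ∘ₗ layerLin kf Wmat s n

lemma reluLayers_eq_layerLin (kf : ℕ → ℕ)
    (Wmat : ∀ i : ℕ, Matrix (Fin (kf (i + 1))) (Fin (kf i)) ℝ)
    (s : ∀ n : ℕ, Fin (kf (n+1)) → Bool) (z : Fin (kf 0) → ℝ) :
    ∀ n : ℕ,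
      (∀ m, m < n → ∀ j, s m j = decide (0 ≤ (Wmat m).mulVec (reluLayers kf Wmat m z) j)) →
      reluLayers kf Wmat n z = layerLin kf Wmat s n z
  | 0, _ => rfl
  | n + 1, h => by
    have ih := reluLayers_eq_layerLin kf Wmat s z n (fun m hm => h m (Nat.lt_succ_of_lt hm))
    funext j
    have hs : s n j = decide (0 ≤ (Wmat n).mulVec (reluLayers kf Wmat n z) j) :=
      h n (Nat.lt_succ_self n) j
    show max ((Wmat n).mulVec (reluLayers kf Wmat n z) j) 0
        = maskMap (s n) ((Wmat n).mulVecLin (layerLin kf Wmat s n z)) j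
    rw [← ih]
    show _ = if s n j then (Wmat n).mulVec (reluLayers kf Wmat n z) j else 0
    rw [hs]
    by_cases h0 : 0 ≤ (Wmat n).mulVec (reluLayers kf Wmat n z) j
    · simp [h0, max_eq_left h0]
    · simp [h0, max_eq_right (le_of_not_ge h0)]

/-- Activation patterns of a depth-`d` network. -/
abbrev PatType (kf : ℕ → ℕ) (d : ℕ) := (i : Fin d) → Fin (kf ((i : ℕ)+1)) → Bool

/-- Extend a pattern on `Fin d` to all of `ℕ` by `false`. -/
def extPat {kf : ℕ → ℕ} {d : ℕ} (s : PatType kf d) : ∀ n : ℕ, Fin (kf (n+1)) → Bool :=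
  fun n => if h : n < d then s ⟨n, h⟩ else fun _ => false

/-- The activation pattern of input `z`. -/
def pat (kf : ℕ → ℕ) (Wmat : ∀ i : ℕ, Matrix (Fin (kf (i + 1))) (Fin (kf i)) ℝ)
    (d : ℕ) (z : Fin (kf 0) → ℝ) : PatType kf d :=
  fun i j => decide (0 ≤ (Wmat i).mulVec (reluLayers kf Wmat i z) j)

section Network

variable (kf : ℕ → ℕ) (Wmat : ∀ i : ℕ, Matrix (Fin (kf (i + 1))) (Fin (kf i)) ℝ) (d : ℕ)

lemma relu_eq_lin_of_pat (z : Fin (kf 0) → ℝ) (n : ℕ) (hn : n ≤ d) :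
    reluLayers kf Wmat n z = layerLin kf Wmat (extPat (pat kf Wmat d z)) n z := by
  apply reluLayers_eq_layerLin
  intro m hm j
  have hmd : m < d := lt_of_lt_of_le hm hn
  simp only [extPat, dif_pos hmd]
  rfl

/-- sign characterization of the region with pattern `s`. -/
lemma pat_eq_iff (s : PatType kf d) (z : Fin (kf 0) → ℝ) :
    pat kf Wmat d z = s ↔
      ∀ (i : Fin d) (j : Fin (kf ((i:ℕ)+1))),
        (0 ≤ (Wmat i).mulVecLin (layerLin kf Wmat (extPat s) i z) j ↔ s i j = true) := by
  constructor
  · rintro rfl i j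
    rw [Matrix.mulVecLin_apply, ← relu_eq_lin_of_pat kf Wmat d z i (le_of_lt i.isLt)]
    simp [pat]
  · intro h
    have key : ∀ n, n ≤ d → ∀ m, (hmd : m < d) → m < n → ∀ j,
        pat kf Wmat d z ⟨m, hmd⟩ j = s ⟨m, hmd⟩ j := by
      intro n
      induction n with
      | zero => intro _ m hmd hm; omega
      | succ n ih =>
        intro hnd m hmd hmn j
        rcases Nat.lt_succ_iff_lt_or_eq.mp hmn with h' | rfl
        · exact ih (by omega) m hmd h' j
        · have hrel : reluLayers kf Wmat m z = layerLin kf Wmat (extPat s) m z := by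
            apply reluLayers_eq_layerLin
            intro m' hm' j'
            have hm'd : m' < d := lt_trans hm' hmd
            simp only [extPat, dif_pos hm'd]
            rw [← ih (by omega) m' hm'd hm' j']
            rfl
          have hpz : pat kf Wmat d z ⟨m, hmd⟩ j
              = decide (0 ≤ (Wmat m).mulVec (reluLayers kf Wmat m z) j) := rfl
          have hiff := h ⟨m, hmd⟩ j
          rw [Matrix.mulVecLin_apply, ← hrel] at hiff
          rw [hpz]
          cases hsb : s ⟨m, hmd⟩ j
          · rw [hsb] at hiff; simp only [Bool.false_eq_true, iff_false] at hiff
            simpa using hiff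
          · rw [hsb] at hiff; simp only [iff_true] at hiff
            simpa using hiff
    funext i j
    have := key d le_rfl i i.isLt i.isLt j
    simpa using this

end Network

open Finset

section Network2

variable (kf : ℕ → ℕ) (Wmat : ∀ i : ℕ, Matrix (Fin (kf (i + 1))) (Fin (kf i)) ℝ) (d : ℕ)

/-- The region of inputs with activation pattern `s`. -/
def region (s : PatType kf d) : Set (Fin (kf 0) → ℝ) := {z | pat kf Wmat d z = s}

lemma region_convex (s : PatType kf d) : Convex ℝ (region kf Wmat d s) := by
  intro x hx y hy a b ha hb hab
  rw [region, Set.mem_setOf_eq, pat_eq_iff] at hx hy ⊢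
  intro i j
  have hx' := hx i j
  have hy' := hy i j
  set L : (Fin (kf 0) → ℝ) →ₗ[ℝ] ℝ :=
    (LinearMap.proj j) ∘ₗ (Wmat i).mulVecLin ∘ₗ layerLin kf Wmat (extPat s) i with hL
  have hLx : ∀ w : Fin (kf 0) → ℝ, (Wmat i).mulVecLin (layerLin kf Wmat (extPat s) i w) j = L w :=
    fun w => rfl
  rw [hLx] at hx' hy' ⊢
  have hlin : L (a • x + b • y) = a * L x + b * L y := by
    rw [map_add, map_smul, map_smul]; rfl
  rw [hlin]
  cases hsb : s i j
  · rw [hsb] at hx' hy'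
    simp only [Bool.false_eq_true, iff_false, not_le] at hx' hy'
    simp only [Bool.false_eq_true, iff_false, not_le]
    rcases ha.lt_or_eq with ha' | ha'
    · have h1 : a * L x < 0 := mul_neg_of_pos_of_neg ha' hx'
      have h2 : b * L y ≤ 0 := mul_nonpos_of_nonneg_of_nonpos hb hy'.le
      linarith
    · have hb1 : b = 1 := by linarith
      rw [← ha', hb1]; simpa using hy'
  · rw [hsb] at hx' hy'
    simp only [iff_true] at hx' hy'
    simp only [iff_true]
    exact add_nonneg (mul_nonneg ha hx') (mul_nonneg hb hy')

lemma region_cone (s : PatType kf d) (c : ℝ) (hc : 0 < c) (z : Fin (kf 0) → ℝ)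
    (hz : z ∈ region kf Wmat d s) : c • z ∈ region kf Wmat d s := by
  rw [region, Set.mem_setOf_eq, pat_eq_iff] at hz ⊢
  intro i j
  have h := hz i j
  rw [map_smul, map_smul, Pi.smul_apply, smul_eq_mul, mul_nonneg_iff_of_pos_left hc]
  exact h

end Network2

/-- Truncation of a pattern after the first `n` layers. -/
def truncPat {kf : ℕ → ℕ} {d : ℕ} (n : ℕ) (s : PatType kf d) : PatType kf d :=
  fun i j => if (i : ℕ) < n then s i j else false

lemma truncPat_truncPat {kf : ℕ → ℕ} {d : ℕ} (n : ℕ) (s : PatType kf d) :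
    truncPat n (truncPat (n+1) s) = truncPat n s := by
  funext i j
  by_cases hi : (i : ℕ) < n
  · simp [truncPat, hi, lt_of_lt_of_le hi (Nat.le_succ n)]
  · simp [truncPat, hi]

lemma signPattern_card_le {k m : ℕ} (φ : Fin m → ((Fin k → ℝ) →ₗ[ℝ] ℝ))
    (F : Finset (Fin m → Bool))
    (hF : ∀ p ∈ F, ∃ z, p = fun j => decide (0 ≤ φ j z)) :
    F.card ≤ ∑ j ∈ Finset.range (k+1), m.choose j := by
  classical
  set toSet : (Fin m → Bool) → Finset (Fin m) :=
    fun p => Finset.univ.filter (fun j => p j = true) with htoSet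
  set 𝒜 : Finset (Finset (Fin m)) := F.image toSet with h𝒜
  have hinj : Set.InjOn toSet F := by
    intro p _ q _ h
    funext j
    have : (j ∈ toSet p) = (j ∈ toSet q) := by rw [h]
    simp only [htoSet, Finset.mem_filter, Finset.mem_univ, true_and] at this
    cases hp : p j <;> cases hq : q j <;> simp [hp, hq] at this ⊢
  have hcard : F.card = 𝒜.card := (Finset.card_image_of_injOn hinj).symm
  have hmem : ∀ u ∈ 𝒜, ∃ z : Fin k → ℝ, ∀ j, j ∈ u ↔ 0 ≤ φ j z := by
    intro u hu
    obtain ⟨p, hp, rfl⟩ := Finset.mem_image.mp hu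
    obtain ⟨z, rfl⟩ := hF p hp
    exact ⟨z, fun j => by simp [htoSet]⟩
  have hshat : ∀ Y ∈ 𝒜.shatterer, Y.card ≤ k := by
    intro Y hY
    rw [Finset.mem_shatterer] at hY
    by_contra hYk
    push_neg at hYk
    have hinjY : Set.InjOn φ Y := by
      intro j hj j' hj' hφ
      by_contra hne
      obtain ⟨u, hu, hYu⟩ := hY (Finset.erase_subset j' Y)
      obtain ⟨z, hz⟩ := hmem u hu
      have hj'mem : j' ∉ Y.erase j' := Finset.notMem_erase _ _
      have hjmem : j ∈ Y.erase j' := Finset.mem_erase.mpr ⟨hne, hj⟩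
      rw [← hYu] at hj'mem hjmem
      have h1 : 0 ≤ φ j z := (hz j).mp (Finset.mem_inter.mp hjmem).2
      have h2 : ¬ (0 ≤ φ j' z) := fun h => hj'mem (Finset.mem_inter.mpr ⟨hj', (hz j').mpr h⟩)
      rw [hφ] at h1; exact h2 h1
    have hrank : Module.finrank ℝ ((Fin k → ℝ) →ₗ[ℝ] ℝ) = k := by
      rw [Module.finrank_linearMap, Module.finrank_self, Module.finrank_fin_fun, mul_one]
    have hlt : Module.finrank ℝ ((Fin k → ℝ) →ₗ[ℝ] ℝ) < (Y.image φ).card := by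
      rw [hrank, Finset.card_image_of_injOn hinjY]; exact hYk
    obtain ⟨f, hfsum, x, hx, hfx⟩ := Module.exists_nontrivial_relation_of_finrank_lt_card hlt
    obtain ⟨j₀, hj₀Y, rfl⟩ := Finset.mem_image.mp hx
    rw [Finset.sum_image (fun a ha b hb h => hinjY ha hb h)] at hfsum
    set ε : ℝ := if 0 < f (φ j₀) then 1 else -1 with hε
    have hε0 : 0 < ε * f (φ j₀) := by
      rcases lt_trichotomy 0 (f (φ j₀)) with h | h | h
      · rw [hε, if_pos h]; linarith
      · exact absurd h.symm hfx
      · rw [hε, if_neg (by linarith)]; nlinarith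
    have hsumε : ∑ j ∈ Y, (ε * f (φ j)) • φ j = 0 := by
      have := congrArg (fun v : (Fin k → ℝ) →ₗ[ℝ] ℝ => ε • v) hfsum
      simp only [Finset.smul_sum, smul_smul, smul_zero] at this
      exact this
    -- pick the region realizing the pattern {j : ε * f (φ j) ≤ 0}
    obtain ⟨u, hu, hYu⟩ := hY (Finset.filter_subset (fun j => ε * f (φ j) ≤ 0) Y)
    obtain ⟨z, hz⟩ := hmem u hu
    have hsign : ∀ j ∈ Y, (0 ≤ φ j z ↔ ε * f (φ j) ≤ 0) := by
      intro j hj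
      constructor
      · intro h
        have : j ∈ Y ∩ u := Finset.mem_inter.mpr ⟨hj, (hz j).mpr h⟩
        rw [hYu] at this
        exact (Finset.mem_filter.mp this).2
      · intro h
        have : j ∈ Y.filter (fun j => ε * f (φ j) ≤ 0) := Finset.mem_filter.mpr ⟨hj, h⟩
        rw [← hYu] at this
        exact (hz j).mp (Finset.mem_inter.mp this).2
    have hterms : ∀ j ∈ Y, (ε * f (φ j)) * φ j z ≤ 0 := by
      intro j hj
      rcases le_or_gt (ε * f (φ j)) 0 with h | h
      · have := (hsign j hj).mpr h
        exact mul_nonpos_of_nonpos_of_nonneg h this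
      · have : ¬ (0 ≤ φ j z) := fun h' => absurd ((hsign j hj).mp h') (by linarith)
        push_neg at this
        nlinarith
    have hstrict : (ε * f (φ j₀)) * φ j₀ z < 0 := by
      have : ¬ (0 ≤ φ j₀ z) := fun h' => absurd ((hsign j₀ hj₀Y).mp h') (by linarith)
      push_neg at this
      nlinarith
    have hzero : ∑ j ∈ Y, (ε * f (φ j)) * φ j z = 0 := by
      have := congrArg (fun L : (Fin k → ℝ) →ₗ[ℝ] ℝ => L z) hsumε
      simpa using this
    have hneg : ∑ j ∈ Y, (ε * f (φ j)) * φ j z < 0 := by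
      calc ∑ j ∈ Y, (ε * f (φ j)) * φ j z
          < ∑ j ∈ Y, (0:ℝ) := by
            refine Finset.sum_lt_sum hterms ⟨j₀, hj₀Y, hstrict⟩
        _ = 0 := by simp
    exact absurd hzero (ne_of_lt hneg)
  -- conclude via Sauer-Shelah
  calc F.card = 𝒜.card := hcard
    _ ≤ 𝒜.shatterer.card := Finset.card_le_card_shatterer 𝒜
    _ ≤ ((Finset.range (k+1)).biUnion
          (fun j => Finset.univ.powersetCard j : ℕ → Finset (Finset (Fin m)))).card := by
        refine Finset.card_le_card ?_
        intro Y hY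
        rw [Finset.mem_biUnion]
        exact ⟨Y.card, Finset.mem_range.mpr (Nat.lt_succ_of_le (hshat Y hY)),
          Finset.mem_powersetCard.mpr ⟨Finset.subset_univ _, rfl⟩⟩
    _ ≤ ∑ j ∈ Finset.range (k+1), m.choose j := by
        refine (Finset.card_biUnion_le).trans ?_
        refine Finset.sum_le_sum fun j _ => ?_
        rw [Finset.card_powersetCard, Finset.card_univ, Fintype.card_fin]

section Counting

variable (kf : ℕ → ℕ) (Wmat : ∀ i : ℕ, Matrix (Fin (kf (i + 1))) (Fin (kf i)) ℝ) (d : ℕ)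

lemma card_trunc_le : ∀ n, n ≤ d →
    (Set.toFinite (Set.range fun z => truncPat n (pat kf Wmat d z))).toFinset.card
      ≤ ∏ m ∈ Finset.range n, ∑ j ∈ Finset.range (kf 0 + 1), (kf (m+1)).choose j := by
  intro n
  induction n with
  | zero =>
    intro _
    rw [Finset.prod_range_zero]
    refine Finset.card_le_one.mpr ?_
    intro a ha b hb
    rw [Set.Finite.mem_toFinset] at ha hb
    obtain ⟨z, rfl⟩ := ha
    obtain ⟨w, rfl⟩ := hb
    funext i j
    simp [truncPat]
  | succ n ih =>
    intro hn
    have hnd : n < d := hn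
    have ihn := ih (le_of_lt hnd)
    set Φ : PatType kf d → Fin (kf (n+1)) → ((Fin (kf 0) → ℝ) →ₗ[ℝ] ℝ) :=
      fun b j => (LinearMap.proj j) ∘ₗ ((Wmat n).mulVecLin ∘ₗ layerLin kf Wmat (extPat b) n)
      with hΦ
    set Lb : PatType kf d → Finset (Fin (kf (n+1)) → Bool) :=
      fun b => (Set.toFinite (Set.range fun z : Fin (kf 0) → ℝ =>
        fun j => decide (0 ≤ Φ b j z))).toFinset with hLb
    have hlayer : ∀ (z : Fin (kf 0) → ℝ) j, pat kf Wmat d z ⟨n, hnd⟩ j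
        = decide (0 ≤ Φ (truncPat n (pat kf Wmat d z)) j z) := by
      intro z j
      have hrel : reluLayers kf Wmat n z
          = layerLin kf Wmat (extPat (truncPat n (pat kf Wmat d z))) n z := by
        apply reluLayers_eq_layerLin
        intro m hm j'
        have hmd : m < d := lt_trans hm hnd
        simp only [extPat, dif_pos hmd, truncPat, if_pos hm]
        rfl
      show decide (0 ≤ (Wmat n).mulVec (reluLayers kf Wmat n z) j) = _
      rw [hrel]
      rfl
    have step1 : (Set.toFinite (Set.range fun z =>
          truncPat (n+1) (pat kf Wmat d z))).toFinset.card
        ≤ (((Set.toFinite (Set.range fun z =>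
            truncPat n (pat kf Wmat d z))).toFinset).biUnion
            (fun b => {b} ×ˢ Lb b)).card := by
      refine Finset.card_le_card_of_injOn
        (fun s => (truncPat n s, fun j => s ⟨n, hnd⟩ j)) ?_ ?_
      · intro s hs
        rw [Finset.mem_coe, Set.Finite.mem_toFinset] at hs
        obtain ⟨z, rfl⟩ := hs
        rw [Finset.mem_coe, Finset.mem_biUnion]
        refine ⟨truncPat n (pat kf Wmat d z), ?_, ?_⟩
        · rw [Set.Finite.mem_toFinset]
          exact ⟨z, rfl⟩
        · rw [Finset.mem_product]
          constructor
          · rw [Finset.mem_singleton]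
            exact truncPat_truncPat n (pat kf Wmat d z)
          · rw [hLb, Set.Finite.mem_toFinset]
            refine ⟨z, ?_⟩
            funext j
            show decide (0 ≤ Φ (truncPat n (pat kf Wmat d z)) j z)
                = truncPat (n+1) (pat kf Wmat d z) ⟨n, hnd⟩ j
            have h3 : truncPat (n+1) (pat kf Wmat d z) ⟨n, hnd⟩ j
                = pat kf Wmat d z ⟨n, hnd⟩ j := by
              simp [truncPat]
            rw [h3, hlayer]
      · intro s hs s' hs' heq
        rw [Set.Finite.coe_toFinset, Set.mem_range] at hs hs'
        obtain ⟨z, rfl⟩ := hs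
        obtain ⟨w, rfl⟩ := hs'
        have h1 : truncPat n (truncPat (n+1) (pat kf Wmat d z))
            = truncPat n (truncPat (n+1) (pat kf Wmat d w)) := congrArg Prod.fst heq
        have h2 : (fun j => truncPat (n+1) (pat kf Wmat d z) ⟨n, hnd⟩ j)
            = (fun j => truncPat (n+1) (pat kf Wmat d w) ⟨n, hnd⟩ j) := congrArg Prod.snd heq
        funext i j
        rcases lt_trichotomy (i : ℕ) n with hi | hi | hi
        · have h4 := congrFun (congrFun h1 i) j
          simp only [truncPat, if_pos hi] at h4
          exact h4
        · have hii : i = ⟨n, hnd⟩ := Fin.ext hi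
          revert j
          rw [hii]
          intro j
          exact congrFun h2 j
        · show truncPat (n+1) (pat kf Wmat d z) i j = truncPat (n+1) (pat kf Wmat d w) i j
          have hni : ¬ ((i:ℕ) < n + 1) := by omega
          simp [truncPat, hni]
    have step2 : ∀ b, (Lb b).card ≤ ∑ j ∈ Finset.range (kf 0 + 1), (kf (n+1)).choose j := by
      intro b
      refine signPattern_card_le (Φ b) (Lb b) ?_
      intro p hp
      rw [hLb, Set.Finite.mem_toFinset] at hp
      obtain ⟨z, hz⟩ := hp
      exact ⟨z, hz.symm⟩
    calc (Set.toFinite (Set.range fun z =>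
            truncPat (n+1) (pat kf Wmat d z))).toFinset.card
        ≤ (((Set.toFinite (Set.range fun z =>
            truncPat n (pat kf Wmat d z))).toFinset).biUnion
            (fun b => {b} ×ˢ Lb b)).card := step1
      _ ≤ ∑ b ∈ (Set.toFinite (Set.range fun z =>
            truncPat n (pat kf Wmat d z))).toFinset, ({b} ×ˢ Lb b).card :=
          Finset.card_biUnion_le
      _ ≤ ∑ _b ∈ (Set.toFinite (Set.range fun z =>
            truncPat n (pat kf Wmat d z))).toFinset,
            ∑ j ∈ Finset.range (kf 0 + 1), (kf (n+1)).choose j := by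
          refine Finset.sum_le_sum fun b _ => ?_
          rw [Finset.card_product, Finset.card_singleton, one_mul]
          exact step2 b
      _ = (Set.toFinite (Set.range fun z =>
            truncPat n (pat kf Wmat d z))).toFinset.card
            * ∑ j ∈ Finset.range (kf 0 + 1), (kf (n+1)).choose j := by
          rw [Finset.sum_const, smul_eq_mul]
      _ ≤ (∏ m ∈ Finset.range n, ∑ j ∈ Finset.range (kf 0 + 1), (kf (m+1)).choose j)
            * ∑ j ∈ Finset.range (kf 0 + 1), (kf (n+1)).choose j :=
          Nat.mul_le_mul_right _ ihn
      _ = ∏ m ∈ Finset.range (n+1), ∑ j ∈ Finset.range (kf 0 + 1), (kf (m+1)).choose j :=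
          (Finset.prod_range_succ _ _).symm

end Counting


/-- the range of a `(k,d)`-generalized generative network
`G = W ∘ σ(W⁽ᵈ⁾ σ(⋯ σ(W⁽¹⁾ ·)⋯)) : ℝ^k → ℓ²(ℕ; ℝ)` with layer widths
`2 ≤ k = k_0 ≤ k_1 ≤ ⋯ ≤ k_d` is a union of `N ≤ (2e·k_d/k)^{kd}` convex
cones, each contained in a linear subspace of dimension at most `k`. -/
theorem range_generative_network_union_of_cones
    (d : ℕ) (hd : 1 ≤ d) (kf : ℕ → ℕ) (hk2 : 2 ≤ kf 0)
    (hmono : ∀ i : ℕ, i < d → kf i ≤ kf (i + 1))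
    (Wmat : ∀ i : ℕ, Matrix (Fin (kf (i + 1))) (Fin (kf i)) ℝ)
    (Wlin : (Fin (kf d) → ℝ) →ₗ[ℝ] HR)
    (G : (Fin (kf 0) → ℝ) → HR)
    (hG : ∀ z : Fin (kf 0) → ℝ, G z = Wlin (reluLayers kf Wmat d z)) :
    ∃ N : ℕ, (N : ℝ) ≤ (2 * Real.exp 1 * (kf d) / (kf 0)) ^ (kf 0 * d) ∧
      ∃ C : Fin N → Set HR,
        (∀ i : Fin N,
          Convex ℝ (C i) ∧
          (∀ (c : ℝ), 0 < c → ∀ x ∈ C i, c • x ∈ C i) ∧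
          ∃ V : Submodule ℝ HR, FiniteDimensional ℝ V ∧
            Module.finrank ℝ V ≤ kf 0 ∧ C i ⊆ (V : Set HR)) ∧
        Set.range G = ⋃ i : Fin N, C i := by
  classical
  set R : Finset (PatType kf d) :=
    (Set.toFinite (Set.range fun z => pat kf Wmat d z)).toFinset with hR
  have hkfmono : ∀ b, b ≤ d → ∀ a, a ≤ b → kf a ≤ kf b := by
    intro b
    induction b with
    | zero =>
      intro _ a ha
      have : a = 0 := Nat.le_zero.mp ha
      rw [this]
    | succ b ih =>
      intro hbd a ha
      rcases eq_or_lt_of_le ha with rfl | h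
      · exact le_refl _
      · exact (ih (by omega) a (by omega)).trans (hmono b (by omega))
  refine ⟨R.card, ?_, ?_⟩
  · -- the numerical bound
    have hTd : ∀ s : PatType kf d, truncPat d s = s := by
      intro s; funext i j; simp [truncPat, i.isLt]
    have hNnat : R.card
        ≤ ∏ m ∈ Finset.range d, ∑ j ∈ Finset.range (kf 0 + 1), (kf (m+1)).choose j := by
      have hfun : (fun z => truncPat d (pat kf Wmat d z)) = fun z => pat kf Wmat d z := by
        funext z; exact hTd _
      have := card_trunc_le kf Wmat d d le_rfl
      rw [hR]
      convert this using 3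
      rw [hfun]
    have hk0 : (0:ℝ) < kf 0 := by
      have : 0 < kf 0 := by omega
      exact_mod_cast this
    have hk0d : kf 0 ≤ kf d := hkfmono d le_rfl 0 (Nat.zero_le d)
    have hB : ∀ m ∈ Finset.range d,
        ((∑ j ∈ Finset.range (kf 0 + 1), (kf (m+1)).choose j : ℕ) : ℝ)
          ≤ (2 * Real.exp 1 * kf d / kf 0) ^ (kf 0) := by
      intro m hm
      rw [Finset.mem_range] at hm
      have h1 : (∑ j ∈ Finset.range (kf 0 + 1), (kf (m+1)).choose j)
          ≤ ∑ j ∈ Finset.range (kf 0 + 1), (kf d).choose j :=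
        Finset.sum_le_sum fun j _ => Nat.choose_le_choose j (hkfmono d le_rfl (m+1) hm)
      have h2 : ((∑ j ∈ Finset.range (kf 0 + 1), (kf d).choose j : ℕ) : ℝ)
          = ∑ j ∈ Finset.range (kf 0 + 1), ((kf d).choose j : ℝ) := by push_cast; rfl
      calc ((∑ j ∈ Finset.range (kf 0 + 1), (kf (m+1)).choose j : ℕ) : ℝ)
          ≤ ((∑ j ∈ Finset.range (kf 0 + 1), (kf d).choose j : ℕ) : ℝ) := by exact_mod_cast h1
        _ = ∑ j ∈ Finset.range (kf 0 + 1), ((kf d).choose j : ℝ) := h2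
        _ ≤ (Real.exp 1 * kf d / kf 0) ^ (kf 0) := sum_choose_le_pow (by omega) hk0d
        _ ≤ (2 * Real.exp 1 * kf d / kf 0) ^ (kf 0) := by
            refine pow_le_pow_left₀ (by positivity) ?_ _
            have he := Real.exp_pos 1
            have hkd : (0:ℝ) ≤ kf d := Nat.cast_nonneg _
            rw [div_le_div_iff_of_pos_right hk0]
            nlinarith
    calc (R.card : ℝ)
        ≤ ((∏ m ∈ Finset.range d, ∑ j ∈ Finset.range (kf 0 + 1), (kf (m+1)).choose j : ℕ) : ℝ) := by
          exact_mod_cast hNnat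
      _ = ∏ m ∈ Finset.range d,
            ((∑ j ∈ Finset.range (kf 0 + 1), (kf (m+1)).choose j : ℕ) : ℝ) := by
          push_cast; rfl
      _ ≤ ∏ m ∈ Finset.range d, (2 * Real.exp 1 * kf d / kf 0) ^ (kf 0) :=
          Finset.prod_le_prod (fun m _ => Nat.cast_nonneg _) hB
      _ = ((2 * Real.exp 1 * kf d / kf 0) ^ (kf 0)) ^ d := by
          rw [Finset.prod_const, Finset.card_range]
      _ = (2 * Real.exp 1 * kf d / kf 0) ^ (kf 0 * d) := (pow_mul _ _ _).symm
  · have hsurj : ∀ s, s ∈ R → ∃ i : Fin R.card, ((R.equivFin.symm i : {x // x ∈ R}) : PatType kf d) = s := by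
      intro s hs
      exact ⟨R.equivFin ⟨s, hs⟩, by rw [Equiv.symm_apply_apply]⟩
    refine ⟨fun i => (Wlin ∘ₗ layerLin kf Wmat
      (extPat ((R.equivFin.symm i : {x // x ∈ R}) : PatType kf d)) d) ''
      region kf Wmat d ((R.equivFin.symm i : {x // x ∈ R}) : PatType kf d), ?_, ?_⟩
    · intro i
      refine ⟨(region_convex kf Wmat d _).linear_image _, ?_, ?_⟩
      · rintro c hc x ⟨z, hz, rfl⟩
        exact ⟨c • z, region_cone kf Wmat d _ c hc z hz, map_smul _ c z⟩
      · refine ⟨LinearMap.range (Wlin ∘ₗ layerLin kf Wmat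
            (extPat ((R.equivFin.symm i : {x // x ∈ R}) : PatType kf d)) d),
          inferInstance, ?_, ?_⟩
        · refine (LinearMap.finrank_range_le _).trans_eq ?_
          exact Module.finrank_fin_fun ℝ
        · rintro x ⟨z, _, rfl⟩
          exact ⟨z, rfl⟩
    · ext x
      simp only [Set.mem_range, Set.mem_iUnion]
      constructor
      · rintro ⟨z, rfl⟩
        have hmem : pat kf Wmat d z ∈ R := by
          rw [hR, Set.Finite.mem_toFinset]; exact ⟨z, rfl⟩
        obtain ⟨i, hi⟩ := hsurj (pat kf Wmat d z) hmem
        refine ⟨i, z, hi.symm, ?_⟩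
        rw [hG]
        show (Wlin ∘ₗ layerLin kf Wmat
            (extPat ((R.equivFin.symm i : {x // x ∈ R}) : PatType kf d)) d) z
            = Wlin (reluLayers kf Wmat d z)
        rw [hi]
        exact (congrArg Wlin (relu_eq_lin_of_pat kf Wmat d z d le_rfl)).symm
      · rintro ⟨i, z, hz, rfl⟩
        refine ⟨z, ?_⟩
        rw [hG]
        have hp : pat kf Wmat d z = ((R.equivFin.symm i : {x // x ∈ R}) : PatType kf d) := hz
        show Wlin (reluLayers kf Wmat d z)
            = (Wlin ∘ₗ layerLin kf Wmat
                (extPat ((R.equivFin.symm i : {x // x ∈ R}) : PatType kf d)) d) z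
        rw [← hp]
        exact congrArg Wlin (relu_eq_lin_of_pat kf Wmat d z d le_rfl)
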